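/- In sl(3), the element r_{h;ξ} = h·r_DJ - ξ(H_{13} ∧ E_{13} + 2 E_{12} ∧ E_{23}) satisfies the modified classical Yang–Baxter equation: [[r_{h;ξ}, r_{h;ξ}]] is ad-invariant (equal to h² times the ad-invariant element [[r_DJ, r_DJ]]), for all scalars h, ξ. -/

import Mathlib

/- STATEMENT 17: in sl(3), the element r_{h;ξ} = h·r_DJ - ξ(H₁₃ ∧ E₁₃ + 2 E₁₂ ∧ E₂₃)
satisfies the modified classical Yang–Baxter equation: its Schouten bracket
[[r_{h;ξ}, r_{h;ξ}]] equals h² [[r_DJ, r_DJ]], which is ad-invariant, for all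
scalars h, ξ (in particular the cross-term part vanishes). -/

open scoped TensorProduct

set_option maxHeartbeats 1000000
set_option synthInstance.maxHeartbeats 400000

noncomputable section

attribute [local instance 100] LieRing.ofAssociativeRing

abbrev gl3 := Matrix (Fin 3) (Fin 3) ℚ
abbrev U3 := UniversalEnvelopingAlgebra ℚ gl3

noncomputable def ι3 : gl3 →ₗ[ℚ] U3 := (UniversalEnvelopingAlgebra.ι ℚ).toLinearMap

noncomputable def emb : gl3 ⊗[ℚ] gl3 →ₗ[ℚ] U3 ⊗[ℚ] U3 := TensorProduct.map ι3 ι3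

noncomputable def q12 : U3 ⊗[ℚ] U3 →ₐ[ℚ] (U3 ⊗[ℚ] U3) ⊗[ℚ] U3 :=
  Algebra.TensorProduct.includeLeft

noncomputable def q13 : U3 ⊗[ℚ] U3 →ₐ[ℚ] (U3 ⊗[ℚ] U3) ⊗[ℚ] U3 :=
  Algebra.TensorProduct.map Algebra.TensorProduct.includeLeft (AlgHom.id ℚ U3)

noncomputable def q23 : U3 ⊗[ℚ] U3 →ₐ[ℚ] (U3 ⊗[ℚ] U3) ⊗[ℚ] U3 :=
  Algebra.TensorProduct.map Algebra.TensorProduct.includeRight (AlgHom.id ℚ U3)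

/-- the Schouten bracket [[ρ,ρ]] -/
noncomputable def schouten (ρ : U3 ⊗[ℚ] U3) : (U3 ⊗[ℚ] U3) ⊗[ℚ] U3 :=
  ⁅q12 ρ, q13 ρ⁆ + ⁅q12 ρ, q23 ρ⁆ + ⁅q13 ρ, q23 ρ⁆

noncomputable def E (i j : Fin 3) : gl3 := Matrix.single i j 1
noncomputable def H1 : gl3 := E 0 0 - E 1 1
noncomputable def H2 : gl3 := E 1 1 - E 2 2
noncomputable def H13 : gl3 := E 0 0 - E 2 2

/-- a ∧ b = a ⊗ b - b ⊗ a -/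
noncomputable def wedge (a b : gl3) : gl3 ⊗[ℚ] gl3 := a ⊗ₜ[ℚ] b - b ⊗ₜ[ℚ] a

/-- the Drinfeld–Jimbo classical r-matrix of sl(3) -/
noncomputable def rDJ : gl3 ⊗[ℚ] gl3 :=
  (1 / 3 : ℚ) • ((2 : ℚ) • (H1 ⊗ₜ[ℚ] H1) + (2 : ℚ) • (H2 ⊗ₜ[ℚ] H2) +
    H1 ⊗ₜ[ℚ] H2 + H2 ⊗ₜ[ℚ] H1) +
  (2 : ℚ) • (E 1 0 ⊗ₜ[ℚ] E 0 1 + E 2 1 ⊗ₜ[ℚ] E 1 2 + E 2 0 ⊗ₜ[ℚ] E 0 2)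

/-- the jordanian part -/
noncomputable def rj : gl3 ⊗[ℚ] gl3 := wedge H13 (E 0 2) + (2 : ℚ) • wedge (E 0 1) (E 1 2)

/-- a ⊗ 1 ⊗ 1 + 1 ⊗ a ⊗ 1 + 1 ⊗ 1 ⊗ a -/
noncomputable def ins (a : gl3) : (U3 ⊗[ℚ] U3) ⊗[ℚ] U3 :=
  (ι3 a ⊗ₜ[ℚ] 1) ⊗ₜ[ℚ] 1 + ((1 : U3) ⊗ₜ[ℚ] ι3 a) ⊗ₜ[ℚ] 1 +
    ((1 : U3) ⊗ₜ[ℚ] (1 : U3)) ⊗ₜ[ℚ] ι3 a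

-- scratch area
abbrev T2g := gl3 ⊗[ℚ] gl3
abbrev T3g := (gl3 ⊗[ℚ] gl3) ⊗[ℚ] gl3

noncomputable def T3 : T3g →ₗ[ℚ] (U3 ⊗[ℚ] U3) ⊗[ℚ] U3 := TensorProduct.map emb ι3

lemma ι3_lie (x y : gl3) : ι3 ⁅x, y⁆ = ι3 x * ι3 y - ι3 y * ι3 x := by
  have := (UniversalEnvelopingAlgebra.ι ℚ (L := gl3)).map_lie x y
  simpa [ι3, Ring.lie_def] using this

lemma br12_13 (a b c d : gl3) :
    ⁅q12 (emb (a ⊗ₜ[ℚ] b)), q13 (emb (c ⊗ₜ[ℚ] d))⁆ = T3 ((⁅a, c⁆ ⊗ₜ[ℚ] b) ⊗ₜ[ℚ] d) := by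
  simp only [T3, emb, TensorProduct.map_tmul]
  rw [ι3_lie]
  simp [q12, q13, Ring.lie_def, Algebra.TensorProduct.tmul_mul_tmul,
    TensorProduct.sub_tmul, TensorProduct.tmul_sub]

lemma br12_23 (a b c d : gl3) :
    ⁅q12 (emb (a ⊗ₜ[ℚ] b)), q23 (emb (c ⊗ₜ[ℚ] d))⁆ = T3 ((a ⊗ₜ[ℚ] ⁅b, c⁆) ⊗ₜ[ℚ] d) := by
  simp only [T3, emb, TensorProduct.map_tmul]
  rw [ι3_lie]
  simp [q12, q23, Ring.lie_def, Algebra.TensorProduct.tmul_mul_tmul,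
    TensorProduct.sub_tmul, TensorProduct.tmul_sub]

lemma br13_23 (a b c d : gl3) :
    ⁅q13 (emb (a ⊗ₜ[ℚ] b)), q23 (emb (c ⊗ₜ[ℚ] d))⁆ = T3 ((a ⊗ₜ[ℚ] c) ⊗ₜ[ℚ] ⁅b, d⁆) := by
  simp only [T3, emb, TensorProduct.map_tmul]
  rw [ι3_lie]
  simp [q13, q23, Ring.lie_def, Algebra.TensorProduct.tmul_mul_tmul,
    TensorProduct.sub_tmul, TensorProduct.tmul_sub]

noncomputable def lieB : gl3 →ₗ[ℚ] gl3 →ₗ[ℚ] gl3 :=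
  LinearMap.mk₂ ℚ (fun a b => ⁅a, b⁆) add_lie smul_lie lie_add lie_smul

noncomputable def lieM : T2g →ₗ[ℚ] gl3 := TensorProduct.lift lieB

noncomputable def S12 : T2g ⊗[ℚ] T2g →ₗ[ℚ] T3g :=
  (TensorProduct.assoc ℚ gl3 gl3 gl3).symm.toLinearMap ∘ₗ
    TensorProduct.map lieM LinearMap.id ∘ₗ
      (TensorProduct.tensorTensorTensorComm ℚ gl3 gl3 gl3 gl3).toLinearMap

noncomputable def S23 : T2g ⊗[ℚ] T2g →ₗ[ℚ] T3g :=
  TensorProduct.map LinearMap.id lieM ∘ₗ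
    (TensorProduct.tensorTensorTensorComm ℚ gl3 gl3 gl3 gl3).toLinearMap

noncomputable def S13 : T2g ⊗[ℚ] T2g →ₗ[ℚ] T3g :=
  (TensorProduct.assoc ℚ gl3 gl3 gl3).symm.toLinearMap ∘ₗ
    LinearMap.lTensor gl3 (TensorProduct.map lieM LinearMap.id) ∘ₗ
      LinearMap.lTensor gl3 (TensorProduct.assoc ℚ gl3 gl3 gl3).symm.toLinearMap ∘ₗ
        (TensorProduct.assoc ℚ gl3 gl3 T2g).toLinearMap

noncomputable def Sc : T2g ⊗[ℚ] T2g →ₗ[ℚ] T3g := S12 + S13 + S23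

lemma S12_tmul (a b c d : gl3) :
    S12 ((a ⊗ₜ[ℚ] b) ⊗ₜ[ℚ] (c ⊗ₜ[ℚ] d)) = (⁅a, c⁆ ⊗ₜ[ℚ] b) ⊗ₜ[ℚ] d := by
  simp [S12, lieM, lieB, TensorProduct.tensorTensorTensorComm_tmul]

lemma S23_tmul (a b c d : gl3) :
    S23 ((a ⊗ₜ[ℚ] b) ⊗ₜ[ℚ] (c ⊗ₜ[ℚ] d)) = (a ⊗ₜ[ℚ] c) ⊗ₜ[ℚ] ⁅b, d⁆ := by
  simp [S23, lieM, lieB, TensorProduct.tensorTensorTensorComm_tmul]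

lemma S13_tmul (a b c d : gl3) :
    S13 ((a ⊗ₜ[ℚ] b) ⊗ₜ[ℚ] (c ⊗ₜ[ℚ] d)) = (a ⊗ₜ[ℚ] ⁅b, c⁆) ⊗ₜ[ℚ] d := by
  simp [S13, lieM, lieB]

lemma S12_eq (ρ σ : T2g) : ⁅q12 (emb ρ), q13 (emb σ)⁆ = T3 (S12 (ρ ⊗ₜ[ℚ] σ)) := by
  induction ρ using TensorProduct.induction_on with
  | zero => simp [Ring.lie_def]
  | tmul a b =>
    induction σ using TensorProduct.induction_on with
    | zero => simp [Ring.lie_def]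
    | tmul c d => rw [br12_13, S12_tmul]
    | add x y hx hy =>
      rw [map_add, map_add, TensorProduct.tmul_add, map_add, map_add, ← hx, ← hy,
        Ring.lie_def, Ring.lie_def, Ring.lie_def, mul_add, add_mul]
      abel
  | add x y hx hy =>
    rw [map_add, map_add, TensorProduct.add_tmul, map_add, map_add, ← hx, ← hy,
      Ring.lie_def, Ring.lie_def, Ring.lie_def, add_mul, mul_add]
    abel

lemma S13_eq (ρ σ : T2g) : ⁅q12 (emb ρ), q23 (emb σ)⁆ = T3 (S13 (ρ ⊗ₜ[ℚ] σ)) := by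
  induction ρ using TensorProduct.induction_on with
  | zero => simp [Ring.lie_def]
  | tmul a b =>
    induction σ using TensorProduct.induction_on with
    | zero => simp [Ring.lie_def]
    | tmul c d => rw [br12_23, S13_tmul]
    | add x y hx hy =>
      rw [map_add, map_add, TensorProduct.tmul_add, map_add, map_add, ← hx, ← hy,
        Ring.lie_def, Ring.lie_def, Ring.lie_def, mul_add, add_mul]
      abel
  | add x y hx hy =>
    rw [map_add, map_add, TensorProduct.add_tmul, map_add, map_add, ← hx, ← hy,
      Ring.lie_def, Ring.lie_def, Ring.lie_def, add_mul, mul_add]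
    abel

lemma S23_eq (ρ σ : T2g) : ⁅q13 (emb ρ), q23 (emb σ)⁆ = T3 (S23 (ρ ⊗ₜ[ℚ] σ)) := by
  induction ρ using TensorProduct.induction_on with
  | zero => simp [Ring.lie_def]
  | tmul a b =>
    induction σ using TensorProduct.induction_on with
    | zero => simp [Ring.lie_def]
    | tmul c d => rw [br13_23, S23_tmul]
    | add x y hx hy =>
      rw [map_add, map_add, TensorProduct.tmul_add, map_add, map_add, ← hx, ← hy,
        Ring.lie_def, Ring.lie_def, Ring.lie_def, mul_add, add_mul]
      abel
  | add x y hx hy =>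
    rw [map_add, map_add, TensorProduct.add_tmul, map_add, map_add, ← hx, ← hy,
      Ring.lie_def, Ring.lie_def, Ring.lie_def, add_mul, mul_add]
    abel

lemma schouten_emb (ρ : T2g) : schouten (emb ρ) = T3 (Sc (ρ ⊗ₜ[ℚ] ρ)) := by
  simp [schouten, Sc, S12_eq, S13_eq, S23_eq]









lemma E_mul (i j k l : Fin 3) : (E i j : gl3) * E k l = if j = k then E i l else 0 := by
  by_cases hjk : j = k
  · subst hjk; simp [E, Matrix.single_mul_single_same]
  · simp [E, hjk, Matrix.single_mul_single_of_ne]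

lemma Elie (i j k l : Fin 3) :
    ⁅(E i j : gl3), E k l⁆ = (if j = k then E i l else 0) - (if l = i then E k j else 0) := by
  rw [Ring.lie_def, E_mul, E_mul]


lemma rDJ_eq : rDJ =
    (2/3 : ℚ) • (E 0 0 ⊗ₜ[ℚ] E 0 0) + (2/3 : ℚ) • (E 1 1 ⊗ₜ[ℚ] E 1 1) + (2/3 : ℚ) • (E 2 2 ⊗ₜ[ℚ] E 2 2)
    - (1/3 : ℚ) • (E 0 0 ⊗ₜ[ℚ] E 1 1) - (1/3 : ℚ) • (E 0 0 ⊗ₜ[ℚ] E 2 2)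
    - (1/3 : ℚ) • (E 1 1 ⊗ₜ[ℚ] E 0 0) - (1/3 : ℚ) • (E 1 1 ⊗ₜ[ℚ] E 2 2)
    - (1/3 : ℚ) • (E 2 2 ⊗ₜ[ℚ] E 0 0) - (1/3 : ℚ) • (E 2 2 ⊗ₜ[ℚ] E 1 1)
    + (2 : ℚ) • (E 1 0 ⊗ₜ[ℚ] E 0 1) + (2 : ℚ) • (E 2 1 ⊗ₜ[ℚ] E 1 2) + (2 : ℚ) • (E 2 0 ⊗ₜ[ℚ] E 0 2) := by
  simp only [rDJ, H1, H2, TensorProduct.sub_tmul, TensorProduct.tmul_sub, smul_add, smul_sub]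
  module

lemma rj_eq : rj =
    E 0 0 ⊗ₜ[ℚ] E 0 2 - E 2 2 ⊗ₜ[ℚ] E 0 2 - E 0 2 ⊗ₜ[ℚ] E 0 0 + E 0 2 ⊗ₜ[ℚ] E 2 2
    + (2 : ℚ) • (E 0 1 ⊗ₜ[ℚ] E 1 2) - (2 : ℚ) • (E 1 2 ⊗ₜ[ℚ] E 0 1) := by
  simp only [rj, wedge, H13, TensorProduct.sub_tmul, TensorProduct.tmul_sub, smul_sub]
  module

lemma neg_gl3 (x : gl3) : -x = (-1 : ℚ) • x := (neg_one_smul ℚ x).symm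

lemma neg_T2g (x : T2g) : -x = (-1 : ℚ) • x := (neg_one_smul ℚ x).symm

lemma rj_sq : Sc (rj ⊗ₜ[ℚ] rj) = 0 := by
  rw [rj_eq]
  simp only [TensorProduct.sub_tmul, TensorProduct.tmul_sub,
    TensorProduct.add_tmul, TensorProduct.tmul_add, TensorProduct.tmul_smul,
    ← TensorProduct.smul_tmul',
    Sc, LinearMap.add_apply, map_add, map_sub, map_smul, map_neg,
    S12_tmul, S13_tmul, S23_tmul, Elie, sub_eq_add_neg, neg_gl3, neg_T2g]
  simp only [Fin.isValue, show ((2:Fin 3) = 0) = False by simp, show ((0:Fin 3) = 2) = False by simp,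
    show ((1:Fin 3) = 0) = False by simp, show ((0:Fin 3) = 1) = False by simp,
    show ((2:Fin 3) = 1) = False by simp, show ((1:Fin 3) = 2) = False by simp,
    if_true, if_false, ite_self, eq_self_iff_true,
    TensorProduct.zero_tmul, TensorProduct.tmul_zero, sub_zero, zero_sub, sub_self,
    TensorProduct.sub_tmul, TensorProduct.tmul_sub]
  module

lemma rDJ_sq : Sc (rDJ ⊗ₜ[ℚ] rDJ) = 0 := by
  rw [rDJ_eq]
  simp only [TensorProduct.sub_tmul, TensorProduct.tmul_sub,
    TensorProduct.add_tmul, TensorProduct.tmul_add, TensorProduct.tmul_smul,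
    ← TensorProduct.smul_tmul',
    Sc, LinearMap.add_apply, map_add, map_sub, map_smul, map_neg,
    S12_tmul, S13_tmul, S23_tmul, Elie, sub_eq_add_neg, neg_gl3, neg_T2g]
  simp only [Fin.isValue, show ((2:Fin 3) = 0) = False by simp, show ((0:Fin 3) = 2) = False by simp,
    show ((1:Fin 3) = 0) = False by simp, show ((0:Fin 3) = 1) = False by simp,
    show ((2:Fin 3) = 1) = False by simp, show ((1:Fin 3) = 2) = False by simp,
    if_true, if_false, ite_self, eq_self_iff_true,
    TensorProduct.zero_tmul, TensorProduct.tmul_zero, sub_zero, zero_sub, sub_self,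
    TensorProduct.sub_tmul, TensorProduct.tmul_sub]
  module

lemma cross_zero : Sc (rDJ ⊗ₜ[ℚ] rj + rj ⊗ₜ[ℚ] rDJ) = 0 := by
  rw [rDJ_eq, rj_eq]
  simp only [TensorProduct.sub_tmul, TensorProduct.tmul_sub,
    TensorProduct.add_tmul, TensorProduct.tmul_add, TensorProduct.tmul_smul,
    ← TensorProduct.smul_tmul',
    Sc, LinearMap.add_apply, map_add, map_sub, map_smul, map_neg,
    S12_tmul, S13_tmul, S23_tmul, Elie, sub_eq_add_neg, neg_gl3, neg_T2g]
  simp only [Fin.isValue, show ((2:Fin 3) = 0) = False by simp, show ((0:Fin 3) = 2) = False by simp,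
    show ((1:Fin 3) = 0) = False by simp, show ((0:Fin 3) = 1) = False by simp,
    show ((2:Fin 3) = 1) = False by simp, show ((1:Fin 3) = 2) = False by simp,
    if_true, if_false, ite_self, eq_self_iff_true,
    TensorProduct.zero_tmul, TensorProduct.tmul_zero, sub_zero, zero_sub, sub_self,
    TensorProduct.sub_tmul, TensorProduct.tmul_sub]
  module

lemma schouten_rDJ_zero : schouten (emb rDJ) = 0 := by
  rw [schouten_emb, rDJ_sq, map_zero]

theorem r_h_xi_satisfies_MCYBE :
    (∀ h ξ : ℚ, schouten (emb (h • rDJ - ξ • rj)) = (h ^ 2) • schouten (emb rDJ)) ∧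
    (∀ a : gl3, a.trace = 0 → ⁅ins a, schouten (emb rDJ)⁆ = 0) := by
  constructor
  · intro h ξ
    have e : (h • rDJ - ξ • rj) ⊗ₜ[ℚ] (h • rDJ - ξ • rj)
        = (h * h) • (rDJ ⊗ₜ[ℚ] rDJ) - (h * ξ) • (rDJ ⊗ₜ[ℚ] rj + rj ⊗ₜ[ℚ] rDJ)
          + (ξ * ξ) • (rj ⊗ₜ[ℚ] rj) := by
      simp only [TensorProduct.sub_tmul, TensorProduct.tmul_sub, ← TensorProduct.smul_tmul',
        TensorProduct.tmul_smul, smul_sub, smul_add, smul_smul]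
      module
    rw [schouten_emb, e, map_add, map_sub, map_smul, map_smul, map_smul, cross_zero, rj_sq,
      rDJ_sq, schouten_rDJ_zero]
    simp
  · intro a _
    rw [schouten_rDJ_zero]
    simp [Ring.lie_def]
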